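/- Let θ be a CPWL function and consider the composite optimization setting. Suppose Λ_com(x̄) ≠ ∅ and v̄ ∈ Λ_com(x̄) satisfies the second-order sufficient condition: ⟨∇²ₓₓL(x̄,v̄)u, u⟩ > 0 for every u ≠ 0 with ∇Φ(x̄)u ∈ 𝒦(z̄,v̄). Then x̄ is a strict local minimizer of φ := φ₀ + θ∘Φ, i.e., there is a neighborhood of x̄ on which φ₀(x̄) + θ(Φ(x̄)) < φ₀(x) + θ(Φ(x)) for all x ≠ x̄. -/

import Mathlib

open Filter Topology Set RealInnerProductSpace

noncomputable section

abbrev Ev (k : ℕ) := EuclideanSpace ℝ (Fin k)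

/-- The Bouligand–Severi tangent cone to a set `s` at `x`. -/
def tcone {E : Type*} [NormedAddCommGroup E] [NormedSpace ℝ E] (s : Set E) (x : E) : Set E :=
  {w | ∃ (z : ℕ → E) (c : ℕ → ℝ), (∀ k, z k ∈ s) ∧ (∀ k, 0 ≤ c k) ∧
      Tendsto z atTop (𝓝 x) ∧ Tendsto (fun k => c k • (z k - x)) atTop (𝓝 w)}

/-- The data of a convex piecewise linear (CPWL) extended-real-valued function on `ℝ^m`:
`θ(z) = max_i (⟨a i, z⟩ - al i)` on the polyhedron `dom θ = {z | ⟨d i, z⟩ ≤ be i ∀ i}`,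
and `θ(z) = +∞` outside of it. -/
structure CPWL (m : ℕ) where
  l : ℕ
  p : ℕ
  hl : 0 < l
  a : Fin l → Ev m
  al : Fin l → ℝ
  d : Fin p → Ev m
  be : Fin p → ℝ
  dom_nonempty : ∃ z : Ev m, ∀ i, ⟪d i, z⟫ ≤ be i

namespace CPWL

variable {m : ℕ} (θ : CPWL m)

/-- The (polyhedral) domain of the CPWL function. -/
def dom : Set (Ev m) := {z | ∀ i, ⟪θ.d i, z⟫ ≤ θ.be i}

/-- The real value `max_i (⟨a i, z⟩ - al i)` of the CPWL function (meaningful on its domain). -/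
def val (z : Ev m) : ℝ := ⨆ i : Fin θ.l, (⟪θ.a i, z⟫ - θ.al i)

/-- The CPWL function as an extended-real-valued function. -/
def eval (z : Ev m) : EReal :=
  @ite _ (z ∈ θ.dom) (Classical.propDecidable _) ((θ.val z : ℝ) : EReal) ⊤

/-- The subdifferential (of convex analysis) of the CPWL function. -/
def subdiff (z : Ev m) : Set (Ev m) :=
  {v | z ∈ θ.dom ∧ ∀ z' ∈ θ.dom, ⟪v, z' - z⟫ ≤ θ.val z' - θ.val z}

/-- Active indices `K(z)` of the max-representation. -/
def Kact (z : Ev m) : Set (Fin θ.l) := {i | θ.val z = ⟪θ.a i, z⟫ - θ.al i}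

/-- Active indices `I(z)` of the domain constraints. -/
def Iact (z : Ev m) : Set (Fin θ.p) := {i | ⟪θ.d i, z⟫ = θ.be i}

/-- The critical cone `𝒦(z̄,v̄) = {w ∈ T(z̄; dom θ) : ⟨v̄,w⟩ = θ′(z̄;w)}`. -/
def crit (zb vb : Ev m) : Set (Ev m) :=
  {w | w ∈ tcone θ.dom zb ∧
    Tendsto (fun t : ℝ => (θ.val (zb + t • w) - θ.val zb) / t) (𝓝[>] (0 : ℝ))
      (𝓝 ⟪vb, w⟫)}

/-- The graph of the subdifferential mapping. -/
def gph : Set (Ev m × Ev m) := {zv | zv.2 ∈ θ.subdiff zv.1}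

/-- The graphical derivative `(D∂θ)(z̄,v̄)(u)`. -/
def Dsub (zb vb u : Ev m) : Set (Ev m) := {w | (u, w) ∈ tcone θ.gph (zb, vb)}

/-- The regular coderivative `(D̂*∂θ)(z̄,v̄)(u)`. -/
def Dhat (zb vb u : Ev m) : Set (Ev m) :=
  {w | ∀ h ∈ tcone θ.gph (zb, vb), ⟪w, h.1⟫ - ⟪u, h.2⟫ ≤ 0}

end CPWL

section VarSys

variable {n m : ℕ}

/-- The adjoint `∇Φ(x)*` of the Jacobian of `Φ` at `x`. -/
def adjD (Φ : Ev n → Ev m) (x : Ev n) : Ev m →L[ℝ] Ev n :=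
  ContinuousLinearMap.adjoint (fderiv ℝ Φ x)

/-- `Ψ(x,v) = f(x) + ∇Φ(x)* v`. -/
def Psi (f : Ev n → Ev n) (Φ : Ev n → Ev m) (x : Ev n) (v : Ev m) : Ev n :=
  f x + adjD Φ x v

/-- The partial Jacobian `∇ₓΨ(x̄,v̄)`. -/
def gradxPsi (f : Ev n → Ev n) (Φ : Ev n → Ev m) (xb : Ev n) (vb : Ev m) :
    Ev n →L[ℝ] Ev n :=
  fderiv ℝ (fun x => Psi f Φ x vb) xb

/-- The Lagrange multiplier set `Λ(x̄)` of the variational system. -/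
def Lam (f : Ev n → Ev n) (Φ : Ev n → Ev m) (θ : CPWL m) (xb : Ev n) : Set (Ev m) :=
  {v | Psi f Φ xb v = 0 ∧ v ∈ θ.subdiff (Φ xb)}

/-- `v̄` is a critical multiplier for the variational system. -/
def IsCritical (f : Ev n → Ev n) (Φ : Ev n → Ev m) (θ : CPWL m) (xb : Ev n) (vb : Ev m) :
    Prop :=
  ∃ ξ : Ev n, ξ ≠ 0 ∧ ∃ w ∈ θ.Dsub (Φ xb) vb (fderiv ℝ Φ xb ξ),
    gradxPsi f Φ xb vb ξ + adjD Φ xb w = 0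

/-- The solution map of the canonically perturbed variational system. -/
def Smap (f : Ev n → Ev n) (Φ : Ev n → Ev m) (θ : CPWL m) (p₁ : Ev n) (p₂ : Ev m) :
    Set (Ev n × Ev m) :=
  {xv | Psi f Φ xv.1 xv.2 = p₁ ∧ xv.2 ∈ θ.subdiff (Φ xv.1 + p₂)}

end VarSys

section General

variable {n m : ℕ}

/-- The subdifferential of a general extended-real-valued function. -/
def subdiffE (θ : Ev m → EReal) (z : Ev m) : Set (Ev m) :=
  {v | ∀ z', ((⟪v, z' - z⟫ : ℝ) : EReal) ≤ θ z' - θ z}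

/-- The graph of the subdifferential of a general extended-real-valued function. -/
def gphE (θ : Ev m → EReal) : Set (Ev m × Ev m) := {zv | zv.2 ∈ subdiffE θ zv.1}

/-- The graphical derivative of the subdifferential, general case. -/
def DsubE (θ : Ev m → EReal) (zb vb u : Ev m) : Set (Ev m) :=
  {w | (u, w) ∈ tcone (gphE θ) (zb, vb)}

/-- The Lagrange multiplier set, general case. -/
def LamE (f : Ev n → Ev n) (Φ : Ev n → Ev m) (θ : Ev m → EReal) (xb : Ev n) :
    Set (Ev m) :=
  {v | Psi f Φ xb v = 0 ∧ v ∈ subdiffE θ (Φ xb)}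

/-- The solution map of the canonically perturbed variational system, general case. -/
def SmapE (f : Ev n → Ev n) (Φ : Ev n → Ev m) (θ : Ev m → EReal) (p₁ : Ev n)
    (p₂ : Ev m) : Set (Ev n × Ev m) :=
  {xv | Psi f Φ xv.1 xv.2 = p₁ ∧ xv.2 ∈ subdiffE θ (Φ xv.1 + p₂)}

end General

section Composite

variable {n m : ℕ}

/-- The gradient `∇ₓL(·,v)` of the Lagrangian `L(x,v) = φ₀(x) + ⟨Φ(x),v⟩`. -/
def gradL (φ₀ : Ev n → ℝ) (Φ : Ev n → Ev m) (v : Ev m) (x : Ev n) : Ev n :=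
  gradient (fun y => φ₀ y + ⟪Φ y, v⟫) x

/-- The Hessian `∇²ₓₓL(x̄,v)` as a linear operator. -/
def HessOp (φ₀ : Ev n → ℝ) (Φ : Ev n → Ev m) (v : Ev m) (xb : Ev n) : Ev n →L[ℝ] Ev n :=
  fderiv ℝ (gradL φ₀ Φ v) xb

/-- The Lagrange multiplier set `Λ_com(x̄)` of the composite optimization problem. -/
def LamCom (φ₀ : Ev n → ℝ) (Φ : Ev n → Ev m) (θ : CPWL m) (xb : Ev n) : Set (Ev m) :=
  {v | gradient φ₀ xb + adjD Φ xb v = 0 ∧ v ∈ θ.subdiff (Φ xb)}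

/-- Criticality of a multiplier in the composite optimization setting. -/
def IsCriticalCom (φ₀ : Ev n → ℝ) (Φ : Ev n → Ev m) (θ : CPWL m) (xb : Ev n) (v : Ev m) :
    Prop :=
  ∃ ξ : Ev n, ξ ≠ 0 ∧ ∃ w ∈ θ.Dsub (Φ xb) v (fderiv ℝ Φ xb ξ),
    HessOp φ₀ Φ v xb ξ + adjD Φ xb w = 0

/-- The solution map of the canonically perturbed KKT system of composite optimization. -/
def SKKT (φ₀ : Ev n → ℝ) (Φ : Ev n → Ev m) (θ : CPWL m) (p₁ : Ev n) (p₂ : Ev m) :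
    Set (Ev n × Ev m) :=
  {xv | gradient φ₀ xv.1 + adjD Φ xv.1 xv.2 = p₁ ∧ xv.2 ∈ θ.subdiff (Φ xv.1 + p₂)}

/-- `x̄` is a local minimizer of `φ₀ + θ∘Φ`. -/
def LocalMin (φ₀ : Ev n → ℝ) (Φ : Ev n → Ev m) (θ : CPWL m) (xb : Ev n) : Prop :=
  ∃ U ∈ 𝓝 xb, ∀ x ∈ U,
    ((φ₀ xb : ℝ) : EReal) + θ.eval (Φ xb) ≤ ((φ₀ x : ℝ) : EReal) + θ.eval (Φ x)

end Composite

section Calmness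

variable {n m : ℕ}

/-- Isolated calmness of a solution map at `((0,0), q0)`. -/
def IsolCalm (S : Ev n × Ev m → Set (Ev n × Ev m)) (q0 : Ev n × Ev m) : Prop :=
  ∃ c : ℝ, 0 ≤ c ∧ ∃ U ∈ 𝓝 (0 : Ev n × Ev m), ∃ V ∈ 𝓝 q0,
    ∀ p ∈ U, ∀ q ∈ S p ∩ V, ‖q - q0‖ ≤ c * (‖p.1‖ + ‖p.2‖)

/-- Robust isolated calmness of a solution map at `((0,0), q0)`. -/
def RobustIsolCalm (S : Ev n × Ev m → Set (Ev n × Ev m)) (q0 : Ev n × Ev m) : Prop :=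
  ∃ c : ℝ, 0 ≤ c ∧ ∃ U ∈ 𝓝 (0 : Ev n × Ev m), ∃ V ∈ 𝓝 q0,
    (∀ p ∈ U, ∀ q ∈ S p ∩ V, ‖q - q0‖ ≤ c * (‖p.1‖ + ‖p.2‖)) ∧
    (∀ p ∈ U, (S p ∩ V).Nonempty)

/-- The Lipschitz-like (Aubin) property of a solution map around `((0,0), q0)`. -/
def LipschitzLike (S : Ev n × Ev m → Set (Ev n × Ev m)) (q0 : Ev n × Ev m) : Prop :=
  ∃ c : ℝ, 0 ≤ c ∧ ∃ U ∈ 𝓝 (0 : Ev n × Ev m), ∃ V ∈ 𝓝 q0,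
    ∀ p ∈ U, ∀ p' ∈ U, ∀ q ∈ S p ∩ V, ∃ q' ∈ S p', ‖q - q'‖ ≤ c * ‖p - p'‖

end Calmness


namespace CPWL

variable {m : ℕ} (θ : CPWL m)

lemma nonempty_fin : Nonempty (Fin θ.l) := ⟨⟨0, θ.hl⟩⟩

lemma le_val (z : Ev m) (i : Fin θ.l) : ⟪θ.a i, z⟫ - θ.al i ≤ θ.val z := by
  rw [val]; exact le_ciSup (f := fun i => ⟪θ.a i, z⟫ - θ.al i) (Set.finite_range _).bddAbove i

lemma val_le {z : Ev m} {r : ℝ} (h : ∀ i, ⟪θ.a i, z⟫ - θ.al i ≤ r) : θ.val z ≤ r := by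
  haveI := θ.nonempty_fin
  rw [val]; exact ciSup_le h

lemma val_lip : ∃ C : ℝ, 0 ≤ C ∧ ∀ z z' : Ev m, θ.val z ≤ θ.val z' + C * ‖z - z'‖ := by
  haveI := θ.nonempty_fin
  obtain ⟨i₀, -, hmax⟩ := Finset.exists_max_image Finset.univ (fun i => ‖θ.a i‖)
    ⟨⟨0, θ.hl⟩, Finset.mem_univ _⟩
  refine ⟨‖θ.a i₀‖, norm_nonneg _, fun z z' => ?_⟩
  refine θ.val_le fun i => ?_
  have h1 : ⟪θ.a i, z⟫ - ⟪θ.a i, z'⟫ = ⟪θ.a i, z - z'⟫ := by rw [inner_sub_right]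
  have h2 : ⟪θ.a i, z - z'⟫ ≤ ‖θ.a i‖ * ‖z - z'‖ := real_inner_le_norm _ _
  have h3 : ‖θ.a i‖ * ‖z - z'‖ ≤ ‖θ.a i₀‖ * ‖z - z'‖ :=
    mul_le_mul_of_nonneg_right (hmax i (Finset.mem_univ _)) (norm_nonneg _)
  have h4 : ⟪θ.a i, z'⟫ - θ.al i ≤ θ.val z' := θ.le_val z' i
  linarith

lemma dirlin (z w : Ev m) :
    ∃ M : ℝ, ∀ᶠ t in 𝓝[>] (0:ℝ), θ.val (z + t • w) = θ.val z + t * M := by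
  classical
  haveI := θ.nonempty_fin
  set f : Fin θ.l → ℝ := fun i => ⟪θ.a i, z⟫ - θ.al i with hf
  set b : Fin θ.l → ℝ := fun i => f i - θ.val z with hb
  set c : Fin θ.l → ℝ := fun i => ⟪θ.a i, w⟫ with hc
  have hble : ∀ i, b i ≤ 0 := fun i => sub_nonpos.mpr (θ.le_val z i)
  obtain ⟨i₀, -, hmax⟩ := Finset.exists_max_image Finset.univ f ⟨⟨0, θ.hl⟩, Finset.mem_univ _⟩
  have hval : θ.val z = f i₀ :=
    le_antisymm (θ.val_le fun i => hmax i (Finset.mem_univ _)) (θ.le_val z i₀)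
  have hbi₀ : b i₀ = 0 := by simp [hb, hval]
  set S : Finset (Fin θ.l) := Finset.univ.filter (fun i => b i = 0) with hS
  have hSne : S.Nonempty := ⟨i₀, by simp [hS, hbi₀]⟩
  obtain ⟨i₁, hi₁S, hi₁max⟩ := Finset.exists_max_image S c hSne
  refine ⟨c i₁, ?_⟩
  have hev : ∀ᶠ t in 𝓝[>] (0:ℝ), ∀ i, b i + t * c i ≤ t * c i₁ := by
    rw [eventually_all]
    intro i
    by_cases hbi : b i = 0
    · filter_upwards [self_mem_nhdsWithin] with t ht
      have : c i ≤ c i₁ := hi₁max i (by simp [hS, hbi])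
      have ht' : (0:ℝ) ≤ t := le_of_lt ht
      nlinarith
    · have hlt : b i < 0 := lt_of_le_of_ne (hble i) hbi
      have htend : Tendsto (fun t : ℝ => b i + t * (c i - c i₁)) (𝓝[>] 0) (𝓝 (b i)) := by
        have : Tendsto (fun t : ℝ => b i + t * (c i - c i₁)) (𝓝 0)
            (𝓝 (b i + 0 * (c i - c i₁))) :=
          (tendsto_const_nhds.add ((tendsto_id).mul tendsto_const_nhds))
        simpa using this.mono_left nhdsWithin_le_nhds
      filter_upwards [htend.eventually_lt_const hlt] with t ht
      nlinarith [ht]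
  filter_upwards [hev, self_mem_nhdsWithin] with t hall (ht : 0 < t)
  have hexp : ∀ i, ⟪θ.a i, z + t • w⟫ - θ.al i = θ.val z + (b i + t * c i) := by
    intro i
    simp only [inner_add_right, real_inner_smul_right, hb, hc, hf]
    ring
  have hb1 : b i₁ = 0 := by
    have := hi₁S; simp [hS] at this; exact this
  apply le_antisymm
  · refine θ.val_le fun i => ?_
    rw [hexp i]
    have := hall i
    linarith
  · have h1 : ⟪θ.a i₁, z + t • w⟫ - θ.al i₁ ≤ θ.val (z + t • w) := θ.le_val _ i₁
    rw [hexp i₁, hb1] at h1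
    linarith

end CPWL

/-- Along a sequence `y j = xb + s j • v j` with `v j → u₀` on the unit sphere and `s j ↓ 0`,
difference quotients of a differentiable function converge to the directional derivative. -/
lemma seq_deriv_lim {n : ℕ} {E : Type*} [NormedAddCommGroup E] [NormedSpace ℝ E]
    {F : Ev n → E} {xb : Ev n} (hF : DifferentiableAt ℝ F xb)
    {y : ℕ → Ev n} {s : ℕ → ℝ} {v : ℕ → Ev n} {u₀ : Ev n}
    (hs : ∀ j, 0 < s j) (hv1 : ∀ j, ‖v j‖ = 1)
    (hyx : ∀ j, y j - xb = s j • v j)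
    (hy : Tendsto y atTop (𝓝 xb)) (hv : Tendsto v atTop (𝓝 u₀)) :
    Tendsto (fun j => (s j)⁻¹ • (F (y j) - F xb)) atTop (𝓝 (fderiv ℝ F xb u₀)) := by
  set A := fderiv ℝ F xb with hA
  have hynorm : ∀ j, ‖y j - xb‖ = s j := by
    intro j; rw [hyx j, norm_smul, Real.norm_eq_abs, abs_of_pos (hs j), hv1 j, mul_one]
  have hlo := hF.hasFDerivAt.isLittleO
  have hcomp := hlo.comp_tendsto hy
  have hnorm : Tendsto (fun j => ‖F (y j) - F xb - A (y j - xb)‖ / ‖y j - xb‖)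
      atTop (𝓝 0) := hcomp.norm_norm.tendsto_div_nhds_zero
  have hterm2 : Tendsto (fun j => (s j)⁻¹ • (F (y j) - F xb - A (y j - xb))) atTop (𝓝 0) := by
    refine squeeze_zero_norm (fun j => ?_) hnorm
    rw [norm_smul, Real.norm_eq_abs, abs_inv, abs_of_pos (hs j), hynorm j, inv_mul_eq_div]
  have hterm1 : Tendsto (fun j => A (v j)) atTop (𝓝 (A u₀)) :=
    (A.continuous.tendsto _).comp hv
  have hrew : ∀ j, (s j)⁻¹ • (F (y j) - F xb) =
      A (v j) + (s j)⁻¹ • (F (y j) - F xb - A (y j - xb)) := by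
    intro j
    have h1 : A (y j - xb) = s j • A (v j) := by rw [hyx j, map_smul]
    rw [h1, smul_sub ((s j)⁻¹) (F (y j) - F xb) (s j • A (v j)), smul_smul,
      inv_mul_cancel₀ (hs j).ne', one_smul]
    abel
  have := hterm1.add hterm2
  rw [add_zero] at this
  exact this.congr fun j => (hrew j).symm


set_option maxHeartbeats 2000000 in
/-- the second-order sufficient condition yields strict local minimality
in composite optimization. -/
theorem stmt8 {n m : ℕ} (θ : CPWL m) (φ₀ : Ev n → ℝ) (Φ : Ev n → Ev m)
    (xb : Ev n) (vb : Ev m)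
    (hphi : DifferentiableAt ℝ φ₀ xb) (hPhi : DifferentiableAt ℝ Φ xb)
    (hgrad : DifferentiableAt ℝ (gradL φ₀ Φ vb) xb)
    (hdom : Φ xb ∈ θ.dom)
    (hne : (LamCom φ₀ Φ θ xb).Nonempty) (hvb : vb ∈ LamCom φ₀ Φ θ xb)
    (sosc : ∀ u : Ev n, u ≠ 0 → fderiv ℝ Φ xb u ∈ θ.crit (Φ xb) vb →
      0 < ⟪HessOp φ₀ Φ vb xb u, u⟫) :
    ∃ U ∈ 𝓝 xb, ∀ x ∈ U, x ≠ xb →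
      ((φ₀ xb : ℝ) : EReal) + θ.eval (Φ xb) < ((φ₀ x : ℝ) : EReal) + θ.eval (Φ x) := by
  classical
  by_contra hcon
  push_neg at hcon
  have hsubd := hvb.2
  have hlam := hvb.1
  have hevalxb : θ.eval (Φ xb) = ((θ.val (Φ xb) : ℝ) : EReal) := by
    rw [CPWL.eval, if_pos hdom]
  -- extract a minimizing sequence
  have hseq : ∀ k : ℕ, ∃ y : Ev n, ‖y - xb‖ < 1/(k+1) ∧ y ≠ xb ∧
      ((φ₀ y : ℝ) : EReal) + θ.eval (Φ y) ≤ ((φ₀ xb : ℝ) : EReal) + θ.eval (Φ xb) := by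
    intro k
    obtain ⟨y, hyU, hyne, hylt⟩ := hcon (Metric.ball xb (1/(k+1)))
      (Metric.ball_mem_nhds _ (by positivity))
    exact ⟨y, by simpa [Metric.mem_ball, dist_eq_norm] using hyU, hyne, hylt⟩
  choose x hxlt hxne hxle using hseq
  have hdomk : ∀ k, Φ (x k) ∈ θ.dom := by
    intro k
    by_contra hnd
    have h1 : θ.eval (Φ (x k)) = ⊤ := by rw [CPWL.eval, if_neg hnd]
    have h2 := hxle k
    rw [h1, hevalxb, ← EReal.coe_add] at h2
    simp at h2
    exact EReal.coe_ne_top _ h2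
  have hlek : ∀ k, φ₀ (x k) + θ.val (Φ (x k)) ≤ φ₀ xb + θ.val (Φ xb) := by
    intro k
    have h2 := hxle k
    rw [hevalxb, CPWL.eval, if_pos (hdomk k), ← EReal.coe_add, ← EReal.coe_add] at h2
    exact_mod_cast h2
  have hx0 : Tendsto x atTop (𝓝 xb) := by
    rw [tendsto_iff_norm_sub_tendsto_zero]
    exact squeeze_zero (fun k => norm_nonneg _) (fun k => (hxlt k).le)
      tendsto_one_div_add_atTop_nhds_zero_nat
  set t : ℕ → ℝ := fun k => ‖x k - xb‖ with htdef
  have ht0 : ∀ k, 0 < t k := fun k => norm_pos_iff.mpr (sub_ne_zero.mpr (hxne k))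
  have httend : Tendsto t atTop (𝓝 0) := tendsto_iff_norm_sub_tendsto_zero.mp hx0
  set u : ℕ → Ev n := fun k => (t k)⁻¹ • (x k - xb) with hudef
  have hu1 : ∀ k, ‖u k‖ = 1 := by
    intro k
    rw [hudef]
    simp only [norm_smul, Real.norm_eq_abs, abs_inv, abs_of_pos (ht0 k)]
    exact inv_mul_cancel₀ (ht0 k).ne'
  obtain ⟨u₀, hu₀mem, φs, hφs, hutend⟩ :=
    (isCompact_sphere (0 : Ev n) 1).tendsto_subseq (x := u) (fun k => by
      simpa [mem_sphere_zero_iff_norm] using hu1 k)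
  have hu₀ : ‖u₀‖ = 1 := by simpa [mem_sphere_zero_iff_norm] using hu₀mem
  have hu₀ne : u₀ ≠ 0 := by
    intro h; rw [h, norm_zero] at hu₀; exact one_ne_zero hu₀.symm
  -- subsequence data
  set y : ℕ → Ev n := fun j => x (φs j) with hydef
  set s : ℕ → ℝ := fun j => t (φs j) with hsdef
  set v : ℕ → Ev n := fun j => u (φs j) with hvdef
  have hy0 : Tendsto y atTop (𝓝 xb) := hx0.comp hφs.tendsto_atTop
  have hs0 : Tendsto s atTop (𝓝 0) := httend.comp hφs.tendsto_atTop
  have hs0' : ∀ j, 0 < s j := fun j => ht0 _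
  have hv1 : ∀ j, ‖v j‖ = 1 := fun j => hu1 _
  have hvtend : Tendsto v atTop (𝓝 u₀) := hutend
  have hyx : ∀ j, y j - xb = s j • v j := fun j => (smul_inv_smul₀ (ht0 _).ne' _).symm
  have hdomj : ∀ j, Φ (y j) ∈ θ.dom := fun j => hdomk (φs j)
  have hlej : ∀ j, φ₀ (y j) + θ.val (Φ (y j)) ≤ φ₀ xb + θ.val (Φ xb) := fun j => hlek (φs j)
  -- limits of difference quotients
  have hr : Tendsto (fun j => (s j)⁻¹ • (Φ (y j) - Φ xb)) atTop (𝓝 (fderiv ℝ Φ xb u₀)) :=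
    seq_deriv_lim hPhi hs0' hv1 hyx hy0 hvtend
  have hq0 : Tendsto (fun j => (s j)⁻¹ * (φ₀ (y j) - φ₀ xb)) atTop (𝓝 (fderiv ℝ φ₀ xb u₀)) :=
    seq_deriv_lim hphi hs0' hv1 hyx hy0 hvtend
  set w : Ev m := fderiv ℝ Φ xb u₀ with hwdef
  obtain ⟨C, hC0, hClip⟩ := θ.val_lip
  obtain ⟨M, hM⟩ := θ.dirlin (Φ xb) w
  have hsIoi : Tendsto s atTop (𝓝[>] 0) :=
    tendsto_nhdsWithin_iff.mpr ⟨hs0, Eventually.of_forall fun j => hs0' j⟩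
  have hMev : ∀ᶠ j in atTop, θ.val (Φ xb + s j • w) = θ.val (Φ xb) + s j * M :=
    hsIoi.eventually hM
  -- the value quotient converges to M
  have hq : Tendsto (fun j => (θ.val (Φ (y j)) - θ.val (Φ xb)) / s j) atTop (𝓝 M) := by
    have hkey : ∀ j, ‖Φ (y j) - (Φ xb + s j • w)‖ =
        s j * ‖(s j)⁻¹ • (Φ (y j) - Φ xb) - w‖ := by
      intro j
      rw [show Φ (y j) - (Φ xb + s j • w) = s j • ((s j)⁻¹ • (Φ (y j) - Φ xb) - w) by
        rw [smul_sub, smul_smul, mul_inv_cancel₀ (hs0' j).ne', one_smul]; abel]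
      rw [norm_smul, Real.norm_eq_abs, abs_of_pos (hs0' j)]
    have hdiff : Tendsto (fun j => (θ.val (Φ (y j)) - θ.val (Φ xb + s j • w)) / s j)
        atTop (𝓝 0) := by
      refine squeeze_zero_norm
        (a := fun j => C * ‖(s j)⁻¹ • (Φ (y j) - Φ xb) - w‖) (fun j => ?_) ?_
      · show |(θ.val (Φ (y j)) - θ.val (Φ xb + s j • w)) / s j| ≤
          C * ‖(s j)⁻¹ • (Φ (y j) - Φ xb) - w‖
        have h1 := hClip (Φ (y j)) (Φ xb + s j • w)
        have h2 := hClip (Φ xb + s j • w) (Φ (y j))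
        rw [norm_sub_rev] at h2
        rw [abs_div, abs_of_pos (hs0' j), div_le_iff₀ (hs0' j)]
        rw [abs_le]
        constructor
        · have := hkey j
          nlinarith [norm_nonneg ((s j)⁻¹ • (Φ (y j) - Φ xb) - w), hC0, hs0' j]
        · have := hkey j
          nlinarith [norm_nonneg ((s j)⁻¹ • (Φ (y j) - Φ xb) - w), hC0, hs0' j]
      · have h6 : Tendsto (fun j => C * ‖(s j)⁻¹ • (Φ (y j) - Φ xb) - w‖) atTop
            (𝓝 (C * ‖w - (w : Ev m)‖)) := ((hr.sub tendsto_const_nhds).norm).const_mul C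
        simpa using h6
    have hconst : Tendsto (fun j => (θ.val (Φ xb + s j • w) - θ.val (Φ xb)) / s j)
        atTop (𝓝 M) := by
      refine tendsto_const_nhds.congr' ?_
      filter_upwards [hMev] with j hj
      rw [hj]
      field_simp
      rw [add_sub_cancel_left, mul_div_cancel_right₀ _ (hs0' j).ne']
    have hsum := hdiff.add hconst
    rw [zero_add] at hsum
    refine hsum.congr fun j => ?_
    rw [← add_div, sub_add_sub_cancel]
  -- M = ⟪vb, w⟫
  have hvbM : ⟪vb, w⟫ ≤ M := by
    have hineq : ∀ j, ⟪vb, (s j)⁻¹ • (Φ (y j) - Φ xb)⟫ ≤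
        (θ.val (Φ (y j)) - θ.val (Φ xb)) / s j := by
      intro j
      have h1 := hsubd.2 (Φ (y j)) (hdomj j)
      rw [real_inner_smul_right, div_eq_inv_mul]
      exact mul_le_mul_of_nonneg_left h1 (inv_pos.mpr (hs0' j)).le
    have hlhs : Tendsto (fun j => ⟪vb, (s j)⁻¹ • (Φ (y j) - Φ xb)⟫) atTop (𝓝 ⟪vb, w⟫) :=
      tendsto_const_nhds.inner hr
    exact le_of_tendsto_of_tendsto' hlhs hq hineq
  have hMle : M ≤ ⟪vb, w⟫ := by
    have hgradφ : fderiv ℝ φ₀ xb u₀ = -⟪vb, w⟫ := by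
      have h1 : gradient φ₀ xb = -(adjD Φ xb vb) := eq_neg_of_add_eq_zero_left hlam
      calc fderiv ℝ φ₀ xb u₀ = ⟪gradient φ₀ xb, u₀⟫ := by
            rw [gradient]
            exact (InnerProductSpace.toDual_symm_apply).symm
        _ = -⟪adjD Φ xb vb, u₀⟫ := by rw [h1, inner_neg_left]
        _ = -⟪vb, w⟫ := by
            rw [adjD, ContinuousLinearMap.adjoint_inner_left]
    have hineq : ∀ j, (s j)⁻¹ * (φ₀ (y j) - φ₀ xb) ≤
        -((θ.val (Φ (y j)) - θ.val (Φ xb)) / s j) := by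
      intro j
      have h1 := hlej j
      rw [← neg_div, div_eq_inv_mul]
      apply mul_le_mul_of_nonneg_left _ (inv_pos.mpr (hs0' j)).le
      linarith
    have hlim := le_of_tendsto_of_tendsto' hq0 hq.neg hineq
    rw [hgradφ] at hlim
    linarith
  have hMeq : M = ⟪vb, w⟫ := le_antisymm hMle hvbM
  -- the critical cone membership and SOSC
  have hcrit : w ∈ θ.crit (Φ xb) vb := by
    constructor
    · exact ⟨fun j => Φ (y j), fun j => (s j)⁻¹, fun j => hdomj j,
        fun j => (inv_pos.mpr (hs0' j)).le,
        (hPhi.continuousAt.tendsto).comp hy0, hr⟩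
    · rw [← hMeq]
      refine tendsto_const_nhds.congr' ?_
      filter_upwards [hM, self_mem_nhdsWithin] with τ hτ (hτ0 : 0 < τ)
      rw [hτ]
      field_simp
      ring
  have hpos : 0 < ⟪HessOp φ₀ Φ vb xb u₀, u₀⟫ := sosc u₀ hu₀ne hcrit
  -- Step B : second-order contradiction
  set L : Ev n → ℝ := fun x => φ₀ x + ⟪Φ x, vb⟫ with hLdef
  have hgL : ∀ z, gradL φ₀ Φ vb z = gradient L z := fun z => rfl
  set H : Ev n →L[ℝ] Ev n := HessOp φ₀ Φ vb xb with hHdef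
  have hinnerD : HasFDerivAt (fun x => ⟪Φ x, vb⟫)
      ((innerSL ℝ vb).comp (fderiv ℝ Φ xb)) xb := by
    have h2 := ((innerSL ℝ vb).hasFDerivAt (x := Φ xb)).comp xb hPhi.hasFDerivAt
    have h3 : (fun x => ⟪Φ x, vb⟫) = fun x => (innerSL ℝ vb) (Φ x) := by
      funext x
      rw [innerSL_apply_apply, real_inner_comm]
    rw [h3]
    exact h2
  have hLdiff_xb : DifferentiableAt ℝ L xb := hphi.add hinnerD.differentiableAt
  have hgxb : gradL φ₀ Φ vb xb = 0 := by
    have hFD : HasFDerivAt L ((InnerProductSpace.toDual ℝ (Ev n))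
        (gradient φ₀ xb + adjD Φ xb vb)) xb := by
      have hsum := (hphi.hasFDerivAt).add hinnerD
      convert hsum using 1
      iterate 4 rfl
      ext h
      simp only [ContinuousLinearMap.add_apply, ContinuousLinearMap.comp_apply,
        InnerProductSpace.toDual_apply_apply, innerSL_apply_apply]
      rw [inner_add_left]
      congr 1
      · rw [gradient, InnerProductSpace.toDual_symm_apply]
      · rw [adjD, ContinuousLinearMap.adjoint_inner_left]
    have h5 : gradient L xb = gradient φ₀ xb + adjD Φ xb vb := by
      rw [gradient, hFD.fderiv]
      exact (InnerProductSpace.toDual ℝ (Ev n)).symm_apply_apply _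
    rw [hgL, h5, hlam]
  have hHd : HasFDerivAt (gradL φ₀ Φ vb) H xb := hgrad.hasFDerivAt
  set κ : ℝ := ⟪H u₀, u₀⟫ with hκdef
  have hκ0 : 0 < κ := hpos
  have hHu₀ : κ ≤ ‖H u₀‖ := by
    calc κ = ⟪H u₀, u₀⟫ := rfl
      _ ≤ ‖H u₀‖ * ‖u₀‖ := real_inner_le_norm _ _
      _ = ‖H u₀‖ := by rw [hu₀, mul_one]
  -- epsilon-delta form of differentiability of the gradient map
  have hlo' : ∀ᶠ z in 𝓝 xb, ‖gradL φ₀ Φ vb z - H (z - xb)‖ ≤ (κ/4) * ‖z - xb‖ := by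
    have h6 := hHd.isLittleO.def (div_pos hκ0 (by norm_num : (0:ℝ) < 4))
    filter_upwards [h6] with z hz
    rw [hgxb, sub_zero] at hz
    exact hz
  obtain ⟨δ, hδ0, hball⟩ := Metric.eventually_nhds_iff.mp hlo'
  -- choose a good index j
  have hHv : Tendsto (fun j => ‖H (v j)‖) atTop (𝓝 ‖H u₀‖) :=
    ((H.continuous.tendsto _).comp hvtend).norm
  have hHvv : Tendsto (fun j => ⟪H (v j), v j⟫) atTop (𝓝 κ) :=
    ((H.continuous.tendsto _).comp hvtend).inner hvtend
  have hev1 : ∀ᶠ j in atTop, κ/2 < ‖H (v j)‖ :=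
    hHv.eventually_const_lt (by linarith)
  have hev2 : ∀ᶠ j in atTop, κ/2 < ⟪H (v j), v j⟫ :=
    hHvv.eventually_const_lt (by linarith)
  have hev3 : ∀ᶠ j in atTop, s j < δ := hs0.eventually_lt_const hδ0
  obtain ⟨j, hj1, hj2, hj3⟩ := (hev1.and (hev2.and hev3)).exists
  have hT0 : 0 < s j := hs0' j
  have hvj1 : ‖v j‖ = 1 := hv1 j
  have hnorm_seg : ∀ σ : ℝ, 0 ≤ σ → ‖(xb + σ • v j) - xb‖ = σ := by
    intro σ hσ
    rw [add_sub_cancel_left, norm_smul, Real.norm_eq_abs, abs_of_nonneg hσ, hvj1, mul_one]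
  have hball_seg : ∀ σ : ℝ, 0 ≤ σ → σ ≤ s j →
      ‖gradL φ₀ Φ vb (xb + σ • v j) - H (σ • v j)‖ ≤ (κ/4) * σ := by
    intro σ hσ0 hσT
    have hd : dist (xb + σ • v j) xb < δ := by
      rw [dist_eq_norm, hnorm_seg σ hσ0]; linarith
    have := hball hd
    rw [hnorm_seg σ hσ0, add_sub_cancel_left] at this
    exact this
  have hseg : ∀ σ : ℝ, 0 < σ → σ ≤ s j → (κ/4) * σ ≤ ‖gradL φ₀ Φ vb (xb + σ • v j)‖ := by
    intro σ hσ0 hσT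
    have h1 := hball_seg σ hσ0.le hσT
    have h2 : ‖H (σ • v j)‖ = σ * ‖H (v j)‖ := by
      rw [map_smul, norm_smul, Real.norm_eq_abs, abs_of_pos hσ0]
    have h3 : ‖H (σ • v j)‖ - ‖gradL φ₀ Φ vb (xb + σ • v j)‖ ≤
        ‖gradL φ₀ Φ vb (xb + σ • v j) - H (σ • v j)‖ := by
      rw [norm_sub_rev]
      exact (norm_sub_norm_le _ _).trans (le_refl _)
    nlinarith
  have hdiffseg : ∀ σ : ℝ, σ ∈ Icc (0:ℝ) (s j) → DifferentiableAt ℝ L (xb + σ • v j) := by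
    intro σ hσ
    rcases eq_or_lt_of_le hσ.1 with h0 | h0
    · rw [← h0, zero_smul, add_zero]; exact hLdiff_xb
    · by_contra hnd
      have hfz : fderiv ℝ L (xb + σ • v j) = 0 := fderiv_zero_of_not_differentiableAt hnd
      have hgz : gradL φ₀ Φ vb (xb + σ • v j) = 0 := by
        rw [hgL, gradient, hfz, map_zero]
      have := hseg σ h0 hσ.2
      rw [hgz, norm_zero] at this
      nlinarith
  -- the one-dimensional functions
  set ψ : ℝ → ℝ := fun σ => L (xb + σ • v j) with hψdef
  have hψderiv : ∀ σ ∈ Icc (0:ℝ) (s j),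
      HasDerivAt ψ ⟪gradL φ₀ Φ vb (xb + σ • v j), v j⟫ σ := by
    intro σ hσ
    have hline : HasDerivAt (fun σ : ℝ => xb + σ • v j) (v j) σ := by
      simpa using ((hasDerivAt_id σ).smul_const (v j)).const_add xb
    have hLd := (hdiffseg σ hσ).hasFDerivAt
    have hcomp := hLd.comp_hasDerivAt σ hline
    convert hcomp using 1
    iterate 3 rfl
    rw [hgL, gradient, InnerProductSpace.toDual_symm_apply]
  set χ : ℝ → ℝ := fun σ => ψ σ - κ/8 * σ^2 with hχdef
  have hχderiv : ∀ σ ∈ Icc (0:ℝ) (s j),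
      HasDerivAt χ (⟪gradL φ₀ Φ vb (xb + σ • v j), v j⟫ - κ/4 * σ) σ := by
    intro σ hσ
    have h2 : HasDerivAt (fun σ : ℝ => κ/8 * σ^2) (κ/4 * σ) σ := by
      have h3 := (hasDerivAt_pow 2 σ).const_mul (κ/8)
      convert h3 using 1
      iterate 2 rfl
      ring
    exact (hψderiv σ hσ).sub h2
  have hmono : MonotoneOn χ (Icc 0 (s j)) := by
    apply monotoneOn_of_deriv_nonneg (convex_Icc _ _)
    · intro σ hσ
      exact (hχderiv σ hσ).continuousAt.continuousWithinAt
    · intro σ hσ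
      rw [interior_Icc] at hσ
      exact (hχderiv σ (Ioo_subset_Icc_self hσ)).differentiableAt.differentiableWithinAt
    · intro σ hσ
      rw [interior_Icc] at hσ
      rw [(hχderiv σ (Ioo_subset_Icc_self hσ)).deriv]
      have hσ0 := hσ.1
      have h1 := hball_seg σ hσ0.le hσ.2.le
      have hsm : H (σ • v j) = σ • H (v j) := map_smul H σ (v j)
      have h4 : ⟪gradL φ₀ Φ vb (xb + σ • v j) - H (σ • v j), v j⟫ =
          ⟪gradL φ₀ Φ vb (xb + σ • v j), v j⟫ - ⟪H (σ • v j), v j⟫ :=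
        inner_sub_left _ _ _
      have h4b : ⟪H (σ • v j), v j⟫ = σ * ⟪H (v j), v j⟫ := by
        rw [hsm]; exact real_inner_smul_left _ _ _
      have h5 : |⟪gradL φ₀ Φ vb (xb + σ • v j) - H (σ • v j), v j⟫| ≤ (κ/4) * σ := by
        have h6 := abs_real_inner_le_norm
          (gradL φ₀ Φ vb (xb + σ • v j) - H (σ • v j)) (v j)
        rw [hvj1, mul_one] at h6
        linarith
      have h7 := abs_le.mp h5
      have h8 : σ * (κ/2) ≤ σ * ⟪H (v j), v j⟫ :=
        mul_le_mul_of_nonneg_left hj2.le hσ0.le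
      linarith [h7.1, h7.2]
  have h80 : (0:ℝ) ∈ Icc (0:ℝ) (s j) := left_mem_Icc.mpr hT0.le
  have h8T : s j ∈ Icc (0:ℝ) (s j) := right_mem_Icc.mpr hT0.le
  have hfinal := hmono h80 h8T hT0.le
  have hend : xb + s j • v j = y j := by
    rw [← hyx j]
    abel
  have hχ0 : χ 0 = L xb := by
    simp [hχdef, hψdef]
  have hχT : χ (s j) = L (y j) - κ/8 * (s j)^2 := by
    rw [hχdef]
    simp only [hψdef, hend]
  rw [hχ0, hχT] at hfinal
  -- but L (y j) ≤ L xb from the minimizing sequence and the subgradient inequality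
  have hLle : L (y j) ≤ L xb := by
    have h1 := hlej j
    have h2 := hsubd.2 (Φ (y j)) (hdomj j)
    have h3 : ⟪vb, Φ (y j) - Φ xb⟫ = ⟪Φ (y j), vb⟫ - ⟪Φ xb, vb⟫ := by
      rw [inner_sub_right, real_inner_comm vb (Φ (y j)), real_inner_comm vb (Φ xb)]
    simp only [hLdef]
    linarith
  have h9 : (0:ℝ) < κ/8 * s j^2 := mul_pos (by linarith) (pow_pos hT0 2)
  have h10 : L xb ≤ L xb - κ/8 * s j^2 :=
    le_trans hfinal (sub_le_sub_right hLle _)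
  exact absurd ((le_sub_self_iff _).mp h10) (not_le.mpr h9)
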